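/- Under a completely randomized assignment, for every treatment j ∈ {1,…,J} the variance of the observed group mean is Var(p_j) = ((N − N_j)/N) · (S_j² / N_j). -/

import Mathlib

open Finset

/-- The finset of completely randomized assignments of `N` units to treatments in `J`
with group sizes `Nj`. -/
def assignments (N : ℕ) {J : Type*} [Fintype J] [DecidableEq J] (Nj : J → ℕ) :
    Finset (Fin N → J) :=
  Finset.univ.filter fun T => ∀ j, (Finset.univ.filter fun i => T i = j).card = Nj j

/-- Expectation with respect to the uniform distribution on completely randomized
assignments. -/
noncomputable def expect {N : ℕ} {J : Type*} [Fintype J] [DecidableEq J]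
    (Nj : J → ℕ) (f : (Fin N → J) → ℝ) : ℝ :=
  (∑ T ∈ assignments N Nj, f T) / ((assignments N Nj).card : ℝ)

/-- Variance with respect to the randomization distribution. -/
noncomputable def rvar {N : ℕ} {J : Type*} [Fintype J] [DecidableEq J]
    (Nj : J → ℕ) (f : (Fin N → J) → ℝ) : ℝ :=
  expect Nj fun T => (f T - expect Nj f) ^ 2

/-- Covariance with respect to the randomization distribution. -/
noncomputable def rcov {N : ℕ} {J : Type*} [Fintype J] [DecidableEq J]
    (Nj : J → ℕ) (f g : (Fin N → J) → ℝ) : ℝ :=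
  expect Nj fun T => (f T - expect Nj f) * (g T - expect Nj g)

/-- Observed group mean `p_j` of treatment `j` under assignment `T`. -/
noncomputable def pObs {N : ℕ} {J : Type*} [DecidableEq J]
    (Y : Fin N → J → ℝ) (Nj : J → ℕ) (j : J) (T : Fin N → J) : ℝ :=
  (∑ i ∈ Finset.univ.filter fun i => T i = j, Y i j) / (Nj j : ℝ)

/-- Population mean `P_j`. -/
noncomputable def Pmean {N : ℕ} {J : Type*} (Y : Fin N → J → ℝ) (j : J) : ℝ :=
  (∑ i, Y i j) / (N : ℝ)

/-- Population variance `S_j²`. -/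
noncomputable def S2 {N : ℕ} {J : Type*} (Y : Fin N → J → ℝ) (j : J) : ℝ :=
  (∑ i, (Y i j - Pmean Y j) ^ 2) / ((N : ℝ) - 1)

/-- Variance of unit-level differences `S²_{j-j'}`. -/
noncomputable def S2diff {N : ℕ} {J : Type*} (Y : Fin N → J → ℝ) (j j' : J) : ℝ :=
  (∑ i, (Y i j - Y i j' - (Pmean Y j - Pmean Y j')) ^ 2) / ((N : ℝ) - 1)

/- ### Auxiliary lemmas -/

section Aux

variable {N : ℕ} {J : Type*} [Fintype J] [DecidableEq J] {Nj : J → ℕ}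

lemma CRA.mem_assignments {T : Fin N → J} :
    T ∈ assignments N Nj ↔ ∀ j, (Finset.univ.filter fun i => T i = j).card = Nj j := by
  simp [assignments]

lemma CRA.comp_mem (σ : Equiv.Perm (Fin N)) {T : Fin N → J} (hT : T ∈ assignments N Nj) :
    T ∘ σ ∈ assignments N Nj := by
  rw [CRA.mem_assignments] at hT ⊢
  intro j
  rw [← hT j]
  have : (Finset.univ.filter fun i => (T ∘ σ) i = j)
      = (Finset.univ.filter fun i => T i = j).map σ.symm.toEmbedding := by
    ext i
    simp [Equiv.symm_apply_eq]
  rw [this, Finset.card_map]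

lemma CRA.sum_comp_perm (σ : Equiv.Perm (Fin N)) (f : (Fin N → J) → ℝ) :
    ∑ T ∈ assignments N Nj, f (T ∘ σ) = ∑ T ∈ assignments N Nj, f T := by
  apply Finset.sum_nbij' (fun T => T ∘ σ) (fun T => T ∘ σ.symm)
  · intro T hT; exact CRA.comp_mem σ hT
  · intro T hT; exact CRA.comp_mem σ.symm hT
  · intro T hT; ext i; simp
  · intro T hT; ext i; simp
  · intro T hT; rfl

/-- indicator that unit `i` receives treatment `j`. -/
noncomputable def CRA.ind (j : J) (i : Fin N) (T : Fin N → J) : ℝ := if T i = j then 1 else 0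

open CRA

lemma CRA.sum_ind_row {T : Fin N → J} (hT : T ∈ assignments N Nj) (j : J) :
    ∑ i, ind j i T = (Nj j : ℝ) := by
  rw [CRA.mem_assignments] at hT
  simp only [ind, Finset.sum_boole, hT j]

lemma CRA.sum_ind_symm (j : J) (i i' : Fin N) :
    ∑ T ∈ assignments N Nj, ind j i T = ∑ T ∈ assignments N Nj, ind j i' T := by
  have := CRA.sum_comp_perm (Nj := Nj) (Equiv.swap i i') (ind j i)
  rw [← this]
  apply Finset.sum_congr rfl
  intro T _
  simp [ind, Function.comp, Equiv.swap_apply_left]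

lemma CRA.sum_ind (j : J) (i : Fin N) :
    (N : ℝ) * ∑ T ∈ assignments N Nj, ind j i T
      = ((assignments N Nj).card : ℝ) * (Nj j : ℝ) := by
  have h1 : ∀ i' : Fin N, ∑ T ∈ assignments N Nj, ind j i' T
      = ∑ T ∈ assignments N Nj, ind j i T := fun i' => CRA.sum_ind_symm j i' i
  calc (N : ℝ) * ∑ T ∈ assignments N Nj, ind j i T
      = ∑ _i' : Fin N, ∑ T ∈ assignments N Nj, ind j i T := by
        rw [Finset.sum_const, Finset.card_univ, Fintype.card_fin, nsmul_eq_mul]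
    _ = ∑ i' : Fin N, ∑ T ∈ assignments N Nj, ind j i' T :=
        Finset.sum_congr rfl fun i' _ => (h1 i').symm
    _ = ∑ T ∈ assignments N Nj, ∑ i' : Fin N, ind j i' T := Finset.sum_comm
    _ = ∑ T ∈ assignments N Nj, (Nj j : ℝ) :=
        Finset.sum_congr rfl fun T hT => CRA.sum_ind_row hT j
    _ = _ := by rw [Finset.sum_const, nsmul_eq_mul]

lemma CRA.sum_ind_pair_symm (j : J) {i k i' k' : Fin N} (h : i ≠ k) (h' : i' ≠ k') :
    ∑ T ∈ assignments N Nj, ind j i T * ind j k T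
      = ∑ T ∈ assignments N Nj, ind j i' T * ind j k' T := by
  set k0 := Equiv.swap i i' k with hk0
  have hk0i' : k0 ≠ i' := by
    rw [hk0]
    intro hc
    have := (Equiv.swap i i').injective (a₁ := k) (a₂ := i) (by rw [hc, Equiv.swap_apply_left])
    exact h this.symm
  set σ : Equiv.Perm (Fin N) := (Equiv.swap i i').trans (Equiv.swap k0 k') with hσ
  have hσi : σ i = i' := by
    simp only [hσ, Equiv.trans_apply, Equiv.swap_apply_left]
    exact Equiv.swap_apply_of_ne_of_ne hk0i'.symm h'
  have hσk : σ k = k' := by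
    simp only [hσ, Equiv.trans_apply, ← hk0, Equiv.swap_apply_left]
  have := CRA.sum_comp_perm (Nj := Nj) σ (fun T => ind j i T * ind j k T)
  rw [← this]
  apply Finset.sum_congr rfl
  intro T _
  simp [ind, Function.comp, hσi, hσk]

/-- Splitting a sum over the off-diagonal of `univ × univ`. -/
lemma CRA.sum_offDiag_split (f g : Fin N → ℝ) :
    ∑ x ∈ (Finset.univ : Finset (Fin N)).offDiag, f x.1 * g x.2
      = (∑ i, f i) * (∑ i, g i) - ∑ i, f i * g i := by
  have hprod : ∑ x ∈ (Finset.univ ×ˢ Finset.univ : Finset (Fin N × Fin N)),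
      f x.1 * g x.2 = (∑ i, f i) * (∑ i, g i) := by
    rw [Finset.sum_product, Finset.sum_mul_sum]
  have hdiag : ∑ x ∈ (Finset.univ : Finset (Fin N)).diag, f x.1 * g x.2
      = ∑ i, f i * g i := by
    apply Finset.sum_nbij' (fun x => x.1) (fun i => (i, i))
    · intros; exact Finset.mem_univ _
    · intro i _; simp [Finset.mem_diag]
    · intro x hx
      have h2 := (Finset.mem_diag.mp hx).2
      exact Prod.ext rfl h2
    · intro i _; rfl
    · intro x hx
      have h2 := (Finset.mem_diag.mp hx).2
      rw [← h2]
  have := Finset.sum_union (Finset.disjoint_diag_offDiag (Finset.univ : Finset (Fin N)))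
    (f := fun x : Fin N × Fin N => f x.1 * g x.2)
  rw [Finset.diag_union_offDiag, hprod, hdiag] at this
  linarith

lemma CRA.sum_ind_pair_row {T : Fin N → J} (hT : T ∈ assignments N Nj) (j : J) :
    ∑ x ∈ (Finset.univ : Finset (Fin N)).offDiag, ind j x.1 T * ind j x.2 T
      = (Nj j : ℝ) * ((Nj j : ℝ) - 1) := by
  have hsq : ∀ i, ind j i T * ind j i T = ind j i T := by
    intro i; simp only [ind]; split <;> norm_num
  rw [CRA.sum_offDiag_split (fun i => ind j i T) (fun i => ind j i T), CRA.sum_ind_row hT j]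
  rw [Finset.sum_congr rfl fun i _ => hsq i, CRA.sum_ind_row hT j]
  ring

lemma CRA.sum_ind_pair (j : J) {i k : Fin N} (h : i ≠ k) :
    (N : ℝ) * ((N : ℝ) - 1) * ∑ T ∈ assignments N Nj, ind j i T * ind j k T
      = ((assignments N Nj).card : ℝ) * ((Nj j : ℝ) * ((Nj j : ℝ) - 1)) := by
  have hNpos : 0 < N := i.pos
  have hcardOff : (((Finset.univ : Finset (Fin N)).offDiag.card : ℝ))
      = (N : ℝ) * ((N : ℝ) - 1) := by
    rw [Finset.offDiag_card, Finset.card_univ, Fintype.card_fin]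
    have hle : N ≤ N * N := Nat.le_mul_of_pos_left N hNpos
    push_cast [Nat.cast_sub hle]
    ring
  calc (N : ℝ) * ((N : ℝ) - 1) * ∑ T ∈ assignments N Nj, ind j i T * ind j k T
      = ∑ x ∈ (Finset.univ : Finset (Fin N)).offDiag,
          ∑ T ∈ assignments N Nj, ind j i T * ind j k T := by
        rw [Finset.sum_const, nsmul_eq_mul, hcardOff]
    _ = ∑ x ∈ (Finset.univ : Finset (Fin N)).offDiag,
          ∑ T ∈ assignments N Nj, ind j x.1 T * ind j x.2 T := by
        apply Finset.sum_congr rfl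
        intro x hx
        exact CRA.sum_ind_pair_symm j h (Finset.mem_offDiag.mp hx).2.2
    _ = ∑ T ∈ assignments N Nj,
          ∑ x ∈ (Finset.univ : Finset (Fin N)).offDiag, ind j x.1 T * ind j x.2 T :=
        Finset.sum_comm
    _ = ∑ T ∈ assignments N Nj, (Nj j : ℝ) * ((Nj j : ℝ) - 1) :=
        Finset.sum_congr rfl fun T hT => CRA.sum_ind_pair_row hT j
    _ = _ := by rw [Finset.sum_const, nsmul_eq_mul]

/-- An explicit completely randomized assignment exists. -/
def CRA.fiberEquiv {J : Type*} [DecidableEq J] (β : J → Type*) (j : J) :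
    {x : Σ j, β j // x.1 = j} ≃ β j where
  toFun x := cast (congrArg β x.2) x.1.2
  invFun b := ⟨⟨j, b⟩, rfl⟩
  left_inv := by rintro ⟨⟨j', b⟩, rfl⟩; rfl
  right_inv b := rfl

lemma CRA.exists_assignment {N J' : ℕ} (Nj : Fin J' → ℕ) (hsum : ∑ j, Nj j = N) :
    (assignments N Nj).Nonempty := by
  have hcard : Fintype.card (Fin N) = Fintype.card (Σ j, Fin (Nj j)) := by
    simp [hsum]
  obtain e := Fintype.equivOfCardEq hcard
  refine ⟨fun i => (e i).1, CRA.mem_assignments.mpr fun j => ?_⟩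
  rw [← Fintype.card_subtype]
  have e2 : {i // (e i).1 = j} ≃ {x : Σ j, Fin (Nj j) // x.1 = j} :=
    e.subtypeEquiv (fun i => Iff.rfl)
  rw [Fintype.card_congr (e2.trans (CRA.fiberEquiv _ j)), Fintype.card_fin]

/-- Variance equals expectation of the square minus square of expectation. -/
lemma CRA.rvar_eq (Nj : J → ℕ) (f : (Fin N → J) → ℝ) :
    rvar Nj f = _root_.expect Nj (fun T => f T ^ 2) - (_root_.expect Nj f) ^ 2 := by
  unfold rvar _root_.expect
  set a := ((assignments N Nj).card : ℝ) with ha_def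
  by_cases ha : a = 0
  · simp [ha]
  · set c := (∑ T ∈ assignments N Nj, f T) / a with hc
    have hsumf : ∑ T ∈ assignments N Nj, f T = a * c := by
      rw [hc]; field_simp
    have expand : ∑ T ∈ assignments N Nj, (f T - c) ^ 2
        = (∑ T ∈ assignments N Nj, f T ^ 2) - 2 * c * (∑ T ∈ assignments N Nj, f T)
          + a * c ^ 2 := by
      have h1 : ∀ T, (f T - c) ^ 2 = f T ^ 2 - 2 * c * f T + c ^ 2 := fun T => by ring
      rw [Finset.sum_congr rfl fun T _ => h1 T, Finset.sum_add_distrib,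
        Finset.sum_sub_distrib, ← Finset.mul_sum, Finset.sum_const, nsmul_eq_mul, ← ha_def]
    rw [expand, hsumf]
    field_simp
    ring

end Aux

open CRA in
/-- Under a completely randomized assignment, for every treatment `j` the variance of the
observed group mean is `Var(p_j) = ((N - N_j)/N) * (S_j² / N_j)`. -/
theorem rvar_pObs {N J : ℕ} (hN : 2 ≤ N)
    (Y : Fin N → Fin J → ℝ) (Nj : Fin J → ℕ)
    (hpos : ∀ j, 1 ≤ Nj j) (hsum : ∑ j, Nj j = N) :
    ∀ j, rvar Nj (pObs Y Nj j) =
      (((N : ℝ) - (Nj j : ℝ)) / (N : ℝ)) * (S2 Y j / (Nj j : ℝ)) := by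
  intro j
  have hane : ((assignments N Nj).card : ℝ) ≠ 0 := by
    have := CRA.exists_assignment Nj hsum
    have h2 := Finset.card_pos.mpr this
    exact_mod_cast h2.ne'
  set a : ℝ := ((assignments N Nj).card : ℝ) with ha_def
  set m : ℝ := (Nj j : ℝ) with hm_def
  have hm1 : (1 : ℝ) ≤ m := by rw [hm_def]; exact_mod_cast hpos j
  have hm : m ≠ 0 := by linarith
  have hN2 : (2 : ℝ) ≤ (N : ℝ) := by exact_mod_cast hN
  have hN0 : (N : ℝ) ≠ 0 := by linarith
  have hN1 : (N : ℝ) - 1 ≠ 0 := by linarith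
  set SY : ℝ := ∑ i, Y i j with hSY_def
  set Q : ℝ := ∑ i, (Y i j) ^ 2 with hQ_def
  have hE1 : ∀ i, ∑ T ∈ assignments N Nj, ind j i T = a * m / (N : ℝ) := by
    intro i
    have h := CRA.sum_ind (Nj := Nj) j i
    rw [eq_div_iff hN0]
    linarith [h]
  have hE2 : ∀ i k : Fin N, i ≠ k → ∑ T ∈ assignments N Nj, ind j i T * ind j k T
      = a * (m * (m - 1)) / ((N : ℝ) * ((N : ℝ) - 1)) := by
    intro i k hik
    have h := CRA.sum_ind_pair (Nj := Nj) j hik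
    rw [eq_div_iff (mul_ne_zero hN0 hN1)]
    linear_combination h
  have hp : ∀ T, pObs Y Nj j T = (∑ i, ind j i T * Y i j) / m := by
    intro T
    unfold pObs
    rw [← hm_def]
    congr 1
    rw [Finset.sum_filter]
    refine Finset.sum_congr rfl fun i _ => ?_
    simp only [CRA.ind, ite_mul, one_mul, zero_mul]
  have hsum1 : ∑ T ∈ assignments N Nj, (∑ i, ind j i T * Y i j)
      = a * m / (N : ℝ) * SY := by
    rw [Finset.sum_comm]
    have h1 : ∀ i, ∑ T ∈ assignments N Nj, ind j i T * Y i j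
        = (a * m / (N : ℝ)) * Y i j := by
      intro i; rw [← Finset.sum_mul, hE1 i]
    rw [Finset.sum_congr rfl fun i _ => h1 i, ← Finset.mul_sum, hSY_def]
  have hEp : _root_.expect Nj (pObs Y Nj j) = SY / (N : ℝ) := by
    unfold _root_.expect
    rw [Finset.sum_congr rfl fun T _ => hp T, ← Finset.sum_div, hsum1, ← ha_def]
    field_simp
  have hsum2 : ∑ T ∈ assignments N Nj, (∑ i, ind j i T * Y i j) ^ 2
      = a * m / (N : ℝ) * Q
        + a * (m * (m - 1)) / ((N : ℝ) * ((N : ℝ) - 1)) * (SY ^ 2 - Q) := by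
    have hT : ∀ T ∈ assignments N Nj, (∑ i, ind j i T * Y i j) ^ 2
        = (∑ i, ind j i T * (Y i j) ^ 2)
          + ∑ x ∈ (Finset.univ : Finset (Fin N)).offDiag,
              (ind j x.1 T * Y x.1 j) * (ind j x.2 T * Y x.2 j) := by
      intro T _
      have hsplit := CRA.sum_offDiag_split (fun i => ind j i T * Y i j)
        (fun i => ind j i T * Y i j)
      have hdiag2 : ∀ i : Fin N, (ind j i T * Y i j) * (ind j i T * Y i j)
          = ind j i T * (Y i j) ^ 2 := by
        intro i
        simp only [CRA.ind]
        split <;> ring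
      rw [Finset.sum_congr rfl fun i _ => hdiag2 i] at hsplit
      have hpow : (∑ i, ind j i T * Y i j) ^ 2
          = (∑ i, ind j i T * Y i j) * (∑ i, ind j i T * Y i j) := sq _
      rw [hpow]
      linarith [hsplit]
    rw [Finset.sum_congr rfl hT, Finset.sum_add_distrib]
    congr 1
    · rw [Finset.sum_comm]
      have h1 : ∀ i, ∑ T ∈ assignments N Nj, ind j i T * (Y i j) ^ 2
          = (a * m / (N : ℝ)) * (Y i j) ^ 2 := by
        intro i; rw [← Finset.sum_mul, hE1 i]
      rw [Finset.sum_congr rfl fun i _ => h1 i, ← Finset.mul_sum, hQ_def]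
    · rw [Finset.sum_comm]
      have h2 : ∀ x ∈ (Finset.univ : Finset (Fin N)).offDiag,
          ∑ T ∈ assignments N Nj, (ind j x.1 T * Y x.1 j) * (ind j x.2 T * Y x.2 j)
            = (a * (m * (m - 1)) / ((N : ℝ) * ((N : ℝ) - 1))) * (Y x.1 j * Y x.2 j) := by
        intro x hx
        have hre : ∀ T, (ind j x.1 T * Y x.1 j) * (ind j x.2 T * Y x.2 j)
            = (ind j x.1 T * ind j x.2 T) * (Y x.1 j * Y x.2 j) := fun T => by ring
        rw [Finset.sum_congr rfl fun T _ => hre T, ← Finset.sum_mul,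
          hE2 x.1 x.2 (Finset.mem_offDiag.mp hx).2.2]
      rw [Finset.sum_congr rfl h2, ← Finset.mul_sum,
        CRA.sum_offDiag_split (fun i => Y i j) (fun i => Y i j)]
      have hyy : ∀ i : Fin N, Y i j * Y i j = (Y i j) ^ 2 := fun i => (sq _).symm
      rw [Finset.sum_congr rfl fun i _ => hyy i, ← hSY_def, ← hQ_def, ← sq]
  have hEp2 : _root_.expect Nj (fun T => pObs Y Nj j T ^ 2)
      = (a * m / (N : ℝ) * Q
          + a * (m * (m - 1)) / ((N : ℝ) * ((N : ℝ) - 1)) * (SY ^ 2 - Q)) / m ^ 2 / a := by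
    unfold _root_.expect
    have h3 : ∀ T, pObs Y Nj j T ^ 2 = (∑ i, ind j i T * Y i j) ^ 2 / m ^ 2 := by
      intro T; rw [hp T, div_pow]
    rw [Finset.sum_congr rfl fun T _ => h3 T, ← Finset.sum_div, hsum2, ← ha_def]
  have hS2 : S2 Y j = (Q - SY ^ 2 / (N : ℝ)) / ((N : ℝ) - 1) := by
    unfold S2 Pmean
    rw [← hSY_def]
    congr 1
    have h4 : ∀ i : Fin N, (Y i j - SY / (N : ℝ)) ^ 2
        = (Y i j) ^ 2 - 2 * (SY / (N : ℝ)) * Y i j + (SY / (N : ℝ)) ^ 2 := fun i => by ring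
    rw [Finset.sum_congr rfl fun i _ => h4 i, Finset.sum_add_distrib,
      Finset.sum_sub_distrib, ← Finset.mul_sum, Finset.sum_const, Finset.card_univ,
      Fintype.card_fin, nsmul_eq_mul, ← hSY_def, ← hQ_def]
    field_simp
    ring
  rw [CRA.rvar_eq, hEp, hEp2, hS2]
  field_simp
  ring
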